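/- Let E be a real inner product space, let h : E → ℝ be convex and continuously differentiable (with continuous gradient ∇h), let g : E → ℝ be continuously differentiable (with continuous gradient ∇g), let f : E → ℝ, and let τ > 0. Let (x^k)_{k≥1} and (y^k)_{k≥0} be sequences in E such that for every k ≥ 1, x^k minimizes u ↦ f(u) + ⟨∇g(y^{k−1}), u − y^{k−1}⟩ + (1/τ)·D_h(u, y^{k−1}) over E. If x* ∈ E and (n_k) is a strictly increasing sequence of indices with x^{n_k} → x* and y^{n_k − 1} → x*, then limsup_{k→∞} f(x^{n_k}) ≤ f(x*), and consequently limsup_{k→∞} (f + g)(x^{n_k}) ≤ (f + g)(x*). (Continuity condition for CoCaIn BPG.) -/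

import Mathlib

open RealInnerProductSpace

/-- Continuity condition for CoCaIn BPG: if for every `k ≥ 1` the iterate `x^k`
minimizes `u ↦ f(u) + ⟪∇g(y^{k-1}), u - y^{k-1}⟫ + (1/τ)·D_h(u, y^{k-1})` over `E`
(with `h` convex and continuously differentiable, `g` continuously differentiable),
and `x^{n_k} → x*`, `y^{n_k - 1} → x*` along a strictly increasing sequence of
indices `n_k ≥ 1`, then `limsup f(x^{n_k}) ≤ f(x*)` and consequently
`limsup (f + g)(x^{n_k}) ≤ (f + g)(x*)`. -/
theorem continuity_condition_cocain
    {E : Type*} [NormedAddCommGroup E] [InnerProductSpace ℝ E]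
    (f g h : E → ℝ) (g' h' : E → E)
    (hconv : ConvexOn ℝ Set.univ h)
    (hhdiff : ∀ z, HasFDerivAt h (innerSL ℝ (h' z)) z) (hh'cont : Continuous h')
    (hgdiff : ∀ z, HasFDerivAt g (innerSL ℝ (g' z)) z) (hg'cont : Continuous g')
    (τ : ℝ) (hτ : 0 < τ)
    (x y : ℕ → E)
    (hmin : ∀ k, 1 ≤ k → ∀ u : E,
      f (x k) + ⟪g' (y (k - 1)), x k - y (k - 1)⟫ +
        (1 / τ) * (h (x k) - h (y (k - 1)) - ⟪h' (y (k - 1)), x k - y (k - 1)⟫) ≤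
      f u + ⟪g' (y (k - 1)), u - y (k - 1)⟫ +
        (1 / τ) * (h u - h (y (k - 1)) - ⟪h' (y (k - 1)), u - y (k - 1)⟫))
    (xstar : E) (n : ℕ → ℕ) (hn : StrictMono n) (hn1 : ∀ k, 1 ≤ n k)
    (hx : Filter.Tendsto (fun k => x (n k)) Filter.atTop (nhds xstar))
    (hy : Filter.Tendsto (fun k => y (n k - 1)) Filter.atTop (nhds xstar)) :
    Filter.limsup (fun k => f (x (n k))) Filter.atTop ≤ f xstar ∧
    Filter.limsup (fun k => f (x (n k)) + g (x (n k))) Filter.atTop ≤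
      f xstar + g xstar := by
  classical
  set xs : ℕ → E := fun k => x (n k) with hxs
  set ys : ℕ → E := fun k => y (n k - 1) with hys
  have hhc : Continuous h := continuous_iff_continuousAt.2 fun z => (hhdiff z).continuousAt
  have hgc : Continuous g := continuous_iff_continuousAt.2 fun z => (hgdiff z).continuousAt
  -- upper bound sequence
  set φ : ℕ → ℝ := fun k =>
    f xstar + (⟪g' (ys k), xstar - ys k⟫ - ⟪g' (ys k), xs k - ys k⟫) +
      (1 / τ) * ((h xstar - h (ys k) - ⟪h' (ys k), xstar - ys k⟫) -
        (h (xs k) - h (ys k) - ⟪h' (ys k), xs k - ys k⟫)) with hφ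
  have hub : ∀ k, f (xs k) ≤ φ k := by
    intro k
    have := hmin (n k) (hn1 k) xstar
    simp only [hφ, hxs, hys]
    linarith
  have hφt : Filter.Tendsto φ Filter.atTop (nhds (f xstar)) := by
    have hpair : Filter.Tendsto (fun k => (xs k, ys k)) Filter.atTop (nhds (xstar, xstar)) :=
      hx.prodMk_nhds hy
    have hF : Continuous fun p : E × E =>
        f xstar + (⟪g' p.2, xstar - p.2⟫ - ⟪g' p.2, p.1 - p.2⟫) +
          (1 / τ) * ((h xstar - h p.2 - ⟪h' p.2, xstar - p.2⟫) -
            (h p.1 - h p.2 - ⟪h' p.2, p.1 - p.2⟫)) := by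
      have c1 : Continuous fun p : E × E => (⟪g' p.2, xstar - p.2⟫ : ℝ) :=
        Continuous.inner (hg'cont.comp continuous_snd) (continuous_const.sub continuous_snd)
      have c2 : Continuous fun p : E × E => (⟪g' p.2, p.1 - p.2⟫ : ℝ) :=
        Continuous.inner (hg'cont.comp continuous_snd) (continuous_fst.sub continuous_snd)
      have c3 : Continuous fun p : E × E => (⟪h' p.2, xstar - p.2⟫ : ℝ) :=
        Continuous.inner (hh'cont.comp continuous_snd) (continuous_const.sub continuous_snd)
      have c4 : Continuous fun p : E × E => (⟪h' p.2, p.1 - p.2⟫ : ℝ) :=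
        Continuous.inner (hh'cont.comp continuous_snd) (continuous_fst.sub continuous_snd)
      have c5 : Continuous fun p : E × E => h p.1 := hhc.comp continuous_fst
      have c6 : Continuous fun p : E × E => h p.2 := hhc.comp continuous_snd
      exact (continuous_const.add (c1.sub c2)).add (continuous_const.mul
        (((continuous_const.sub c6).sub c3).sub ((c5.sub c6).sub c4)))
    have ht := (hF.tendsto (xstar, xstar)).comp hpair
    rw [hφ]
    convert ht using 2 <;> simp
  -- lower bound sequence
  set ψ : ℕ → ℝ := fun k =>
    (f (x (n 0)) + ⟪g' (y (n 0 - 1)), x (n 0) - y (n 0 - 1)⟫ +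
      (1 / τ) * (h (x (n 0)) - h (y (n 0 - 1)) - ⟪h' (y (n 0 - 1)), x (n 0) - y (n 0 - 1)⟫))
      - ⟪g' (y (n 0 - 1)), xs k - y (n 0 - 1)⟫
      - (1 / τ) * (h (xs k) - h (y (n 0 - 1)) - ⟪h' (y (n 0 - 1)), xs k - y (n 0 - 1)⟫) with hψ
  have hlb : ∀ k, ψ k ≤ f (xs k) := by
    intro k
    have := hmin (n 0) (hn1 0) (xs k)
    simp only [hψ, hxs]
    linarith
  have hG : Continuous fun u : E =>
        (f (x (n 0)) + ⟪g' (y (n 0 - 1)), x (n 0) - y (n 0 - 1)⟫ +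
          (1 / τ) * (h (x (n 0)) - h (y (n 0 - 1)) - ⟪h' (y (n 0 - 1)), x (n 0) - y (n 0 - 1)⟫))
          - ⟪g' (y (n 0 - 1)), u - y (n 0 - 1)⟫
          - (1 / τ) * (h u - h (y (n 0 - 1)) - ⟪h' (y (n 0 - 1)), u - y (n 0 - 1)⟫) := by
      have d1 : Continuous fun u : E => (⟪g' (y (n 0 - 1)), u - y (n 0 - 1)⟫ : ℝ) :=
        Continuous.inner continuous_const (continuous_id.sub continuous_const)
      have d2 : Continuous fun u : E => (⟪h' (y (n 0 - 1)), u - y (n 0 - 1)⟫ : ℝ) :=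
        Continuous.inner continuous_const (continuous_id.sub continuous_const)
      exact (continuous_const.sub d1).sub (continuous_const.mul
        (((hhc.sub continuous_const).sub d2)))
  have hL : Filter.Tendsto ψ Filter.atTop (nhds
      ((f (x (n 0)) + ⟪g' (y (n 0 - 1)), x (n 0) - y (n 0 - 1)⟫ +
        (1 / τ) * (h (x (n 0)) - h (y (n 0 - 1)) - ⟪h' (y (n 0 - 1)), x (n 0) - y (n 0 - 1)⟫))
        - ⟪g' (y (n 0 - 1)), xstar - y (n 0 - 1)⟫
        - (1 / τ) * (h xstar - h (y (n 0 - 1)) - ⟪h' (y (n 0 - 1)), xstar - y (n 0 - 1)⟫))) := by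
    rw [hψ]
    exact (hG.tendsto xstar).comp hx
  obtain ⟨L, hL⟩ : ∃ L, Filter.Tendsto ψ Filter.atTop (nhds L) := ⟨_, hL⟩
  have hψlb : ∀ᶠ k in Filter.atTop, L - 1 ≤ ψ k :=
    hL.eventually (eventually_ge_nhds (by linarith))
  have hcob : Filter.IsCoboundedUnder (· ≤ ·) Filter.atTop (fun k => f (xs k)) :=
    Filter.isCoboundedUnder_le_of_eventually_le Filter.atTop
      (hψlb.mono fun k hk => le_trans hk (hlb k))
  have h1 : Filter.limsup (fun k => f (xs k)) Filter.atTop ≤ f xstar := by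
    have := Filter.limsup_le_limsup (Filter.Eventually.of_forall hub) hcob
      hφt.isBoundedUnder_le
    rwa [hφt.limsup_eq] at this
  constructor
  · exact h1
  · have hgt : Filter.Tendsto (fun k => g (xs k)) Filter.atTop (nhds (g xstar)) :=
      (hgc.tendsto xstar).comp hx
    have hφg : Filter.Tendsto (fun k => φ k + g (xs k)) Filter.atTop
        (nhds (f xstar + g xstar)) := hφt.add hgt
    have hglb : ∀ᶠ k in Filter.atTop, g xstar - 1 ≤ g (xs k) :=
      hgt.eventually (eventually_ge_nhds (by linarith))
    have hcob2 : Filter.IsCoboundedUnder (· ≤ ·) Filter.atTop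
        (fun k => f (xs k) + g (xs k)) :=
      Filter.isCoboundedUnder_le_of_eventually_le Filter.atTop
        ((hψlb.and hglb).mono fun k hk =>
          add_le_add (le_trans hk.1 (hlb k)) hk.2)
    have := Filter.limsup_le_limsup
      (Filter.Eventually.of_forall fun k => add_le_add_left (hub k) (g (xs k)))
      hcob2 hφg.isBoundedUnder_le
    rwa [hφg.limsup_eq] at this
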